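/- arXiv:1204.1563 — 3 statements merged into one kernel-verified Lean document; each statement's English description precedes it below -/
import Mathlib

section
/- Let p be the uniform distribution on [m] = {1,...,m} and let ε ∈ (0, 1/2). Among all probability mass functions q on [m] with total variation distance d_TV(q,p) ≥ ε, the bi-uniform distribution q* defined by q*_j = 1/m + ε/⌊m/2⌋ for j ≤ ⌊m/2⌋ and q*_j = 1/m − ε/⌈m/2⌉ for j > ⌊m/2⌋ satisfies d_TV(q*,p) = ε, and for even m it achieves the infimum of Σ_j q_j²/p_j = m Σ_j q_j², with optimal value m Σ_j (q*_j)² = 1 + 4ε². -/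
open scoped BigOperators

lemma sum_split_aux (k : ℕ) (a b : ℝ) :
    ∑ i ∈ Finset.range (2*k), (if i < k then a else b) = k*a + k*b := by
  rw [two_mul, Finset.sum_range_add]
  have e1 : ∀ i ∈ Finset.range k, (if i < k then a else b) = a := fun i hi => by
    simp [Finset.mem_range.mp hi]
  have e2 : ∀ i ∈ Finset.range k, (if k + i < k then a else b) = b := fun i _ => by simp
  rw [Finset.sum_congr rfl e1, Finset.sum_congr rfl e2]
  simp [nsmul_eq_mul]

lemma chi_identity (m : ℕ) (hm : 0 < m) (q : Fin m → ℝ) (hsum : ∑ j, q j = 1) :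
    (m:ℝ) * ∑ j, (q j)^2 = 1 + (m:ℝ) * ∑ j, (q j - 1/(m:ℝ))^2 := by
  have hm' : (m:ℝ) ≠ 0 := Nat.cast_ne_zero.mpr hm.ne'
  have : ∑ j, (q j - 1/(m:ℝ))^2
      = ∑ j, ((q j)^2 - 2/(m:ℝ) * q j + 1/(m:ℝ)^2) := by
    apply Finset.sum_congr rfl; intro j _; ring
  rw [this]
  simp only [Finset.sum_add_distrib, Finset.sum_sub_distrib, ← Finset.mul_sum, hsum,
    Finset.sum_const, Finset.card_univ, Fintype.card_fin, nsmul_eq_mul]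
  field_simp
  ring

/-- for uniform `p` on `[m]`, `ε ∈ (0,1/2)`, the bi-uniform distribution `q*`
has total variation distance exactly `ε` from `p`, and (for even `m`) minimizes
`m * Σ q_j²` over all pmfs at TV distance at least `ε`, with value `1 + 4ε²`. -/
theorem biuniform_minimizes_chi_square_small_eps
    (m : ℕ) (hm : 0 < m) (hme : 2 ∣ m) (ε : ℝ) (hε0 : 0 < ε) (hε : ε < 1/2)
    (qstar : Fin m → ℝ)
    (hqstar : ∀ j : Fin m, qstar j =
      if (j : ℕ) < m / 2 then 1/(m:ℝ) + ε/((m/2 : ℕ) : ℝ)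
      else 1/(m:ℝ) - ε/((m/2 : ℕ) : ℝ)) :
    (1/2) * ∑ j, |qstar j - 1/(m:ℝ)| = ε ∧
    (m : ℝ) * ∑ j, (qstar j)^2 = 1 + 4*ε^2 ∧
    ∀ q : Fin m → ℝ, (∀ j, 0 ≤ q j) → ∑ j, q j = 1 →
      ε ≤ (1/2) * ∑ j, |q j - 1/(m:ℝ)| →
      1 + 4*ε^2 ≤ (m:ℝ) * ∑ j, (q j)^2 := by
  obtain ⟨k, rfl⟩ := hme
  have hk : 0 < k := by omega
  have hk2 : 2 * k / 2 = k := by omega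
  have hkR : (0:ℝ) < (k:ℝ) := Nat.cast_pos.mpr hk
  have hmR : (0:ℝ) < ((2*k : ℕ):ℝ) := Nat.cast_pos.mpr hm
  -- each |qstar j - 1/m| = ε/k
  have habs : ∀ j : Fin (2*k), |qstar j - 1/((2*k:ℕ):ℝ)| = ε/(k:ℝ) := by
    intro j
    rw [hqstar j, hk2]
    have hek : (0:ℝ) ≤ ε/(k:ℝ) := le_of_lt (div_pos hε0 hkR)
    split
    · rw [add_sub_cancel_left, abs_of_nonneg hek]
    · rw [sub_sub_cancel_left, abs_neg, abs_of_nonneg hek]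
  have hTV : (1/2 : ℝ) * ∑ j, |qstar j - 1/((2*k:ℕ):ℝ)| = ε := by
    simp only [habs, Finset.sum_const, Finset.card_univ, Fintype.card_fin, nsmul_eq_mul]
    push_cast
    field_simp
  -- sum qstar = 1
  have hsum1 : ∑ j, qstar j = 1 := by
    have : ∑ j : Fin (2*k), qstar j
        = ∑ i ∈ Finset.range (2*k), (if i < k then 1/((2*k:ℕ):ℝ) + ε/(k:ℝ)
            else 1/((2*k:ℕ):ℝ) - ε/(k:ℝ)) := by
      rw [← Fin.sum_univ_eq_sum_range]
      apply Finset.sum_congr rfl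
      intro j _
      rw [hqstar j, hk2]
    rw [this, sum_split_aux]
    push_cast
    field_simp
    ring
  -- value of m * sum qstar^2
  have hval : ((2*k:ℕ):ℝ) * ∑ j, (qstar j)^2 = 1 + 4*ε^2 := by
    rw [chi_identity (2*k) hm qstar hsum1]
    have : ∑ j, (qstar j - 1/((2*k:ℕ):ℝ))^2 = ∑ j : Fin (2*k), (ε/(k:ℝ))^2 := by
      apply Finset.sum_congr rfl
      intro j _
      rw [← sq_abs, habs j]
    rw [this]
    simp only [Finset.sum_const, Finset.card_univ, Fintype.card_fin, nsmul_eq_mul]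
    push_cast
    field_simp
    ring
  refine ⟨hTV, hval, ?_⟩
  intro q hq0 hqsum hqTV
  rw [chi_identity (2*k) hm q hqsum]
  -- Cauchy-Schwarz
  have hCS : (∑ j, |q j - 1/((2*k:ℕ):ℝ)|)^2
      ≤ ((2*k:ℕ):ℝ) * ∑ j, (q j - 1/((2*k:ℕ):ℝ))^2 := by
    have := sq_sum_le_card_mul_sum_sq (s := (Finset.univ : Finset (Fin (2*k))))
      (f := fun j => |q j - 1/((2*k:ℕ):ℝ)|)
    simp only [Finset.card_univ, Fintype.card_fin, sq_abs] at this
    exact_mod_cast this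
  have h2e : 2*ε ≤ ∑ j, |q j - 1/((2*k:ℕ):ℝ)| := by linarith
  have hnn : (0:ℝ) ≤ 2*ε := by linarith
  have h4 : (2*ε)^2 ≤ (∑ j, |q j - 1/((2*k:ℕ):ℝ)|)^2 := by
    apply pow_le_pow_left₀ hnn h2e
  nlinarith [hCS]
end

section
/- Any minimizer q* of Σ_{j=1}^m q_j²/p_j over probability mass functions q on [m] with d_TV(q,p) ≥ ε (p uniform) is bi-uniform: q* takes at most two distinct values, one common value on the set J₊ = {j : q*_j ≥ 1/m} and another common value on J₋ = {j : q*_j < 1/m}. -/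
open scoped BigOperators

lemma averaging_key
    (m : ℕ) (ε : ℝ)
    (q : Fin m → ℝ) (hq0 : ∀ j, 0 ≤ q j) (hq1 : ∑ j, q j = 1)
    (hqd : ε ≤ (1/2) * ∑ j, |q j - 1/(m:ℝ)|)
    (hmin : ∀ r : Fin m → ℝ, (∀ j, 0 ≤ r j) → ∑ j, r j = 1 →
      ε ≤ (1/2) * ∑ j, |r j - 1/(m:ℝ)| → ∑ j, (q j)^2 ≤ ∑ j, (r j)^2)
    (j j' : Fin m) (hjj : j ≠ j')
    (habs : |(q j + q j')/2 - 1/(m:ℝ)| + |(q j + q j')/2 - 1/(m:ℝ)|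
      = |q j - 1/(m:ℝ)| + |q j' - 1/(m:ℝ)|)
    (hne : q j ≠ q j') : False := by
  set a : ℝ := (q j + q j')/2 with ha
  set r : Fin m → ℝ := fun i => if i = j then a else if i = j' then a else q i with hr
  have hrj : r j = a := by simp [hr]
  have hrj' : r j' = a := by simp [hr, hjj.symm]
  have hmemj' : j' ∈ Finset.univ.erase j := Finset.mem_erase.mpr ⟨hjj.symm, Finset.mem_univ j'⟩
  have hsum : ∀ F : Fin m → ℝ,
      ∑ i, F i = F j + F j' + ∑ i ∈ (Finset.univ.erase j).erase j', F i := by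
    intro F
    rw [← Finset.add_sum_erase _ F (Finset.mem_univ j),
        ← Finset.add_sum_erase _ F hmemj']
    ring
  have hoff : ∀ i ∈ (Finset.univ.erase j).erase j', r i = q i := by
    intro i hi
    have h1 : i ≠ j' := (Finset.mem_erase.mp hi).1
    have h2 : i ≠ j := (Finset.mem_erase.mp (Finset.mem_erase.mp hi).2).1
    simp [hr, h1, h2]
  have hoffsum : ∀ g : ℝ → ℝ,
      ∑ i ∈ (Finset.univ.erase j).erase j', g (r i)
      = ∑ i ∈ (Finset.univ.erase j).erase j', g (q i) := by
    intro g; exact Finset.sum_congr rfl (fun i hi => by rw [hoff i hi])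
  have hr0 : ∀ i, 0 ≤ r i := by
    intro i
    have : 0 ≤ a := by have := hq0 j; have := hq0 j'; rw [ha]; linarith
    by_cases h1 : i = j
    · simpa [hr, h1]
    · by_cases h2 : i = j'
      · simpa [hr, h1, h2]
      · simpa [hr, h1, h2] using hq0 i
  have hr1 : ∑ i, r i = 1 := by
    rw [hsum r, hrj, hrj', Finset.sum_congr rfl hoff]
    have := hsum q
    rw [hq1] at this
    rw [ha]; linarith
  have hrd : ε ≤ (1/2) * ∑ i, |r i - 1/(m:ℝ)| := by
    have heq : ∑ i, |r i - 1/(m:ℝ)| = ∑ i, |q i - 1/(m:ℝ)| := by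
      rw [hsum (fun i => |r i - 1/(m:ℝ)|), hsum (fun i => |q i - 1/(m:ℝ)|)]
      simp only [hrj, hrj']
      rw [hoffsum (fun x => |x - 1/(m:ℝ)|)]
      linarith [habs]
    rw [heq]; exact hqd
  have hle := hmin r hr0 hr1 hrd
  have hlt : ∑ i, (r i)^2 < ∑ i, (q i)^2 := by
    rw [hsum (fun i => (r i)^2), hsum (fun i => (q i)^2)]
    simp only [hrj, hrj']
    rw [hoffsum (fun x => x^2)]
    have : a^2 + a^2 < (q j)^2 + (q j')^2 := by
      have hd : q j - q j' ≠ 0 := sub_ne_zero.mpr hne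
      rw [ha]
      nlinarith [sq_nonneg (q j - q j'), sq_abs (q j - q j'), abs_pos.mpr hd, mul_pos (abs_pos.mpr hd) (abs_pos.mpr hd)]
    linarith
  linarith

/-- any minimizer of `Σ q_j²/p_j` (with `p` uniform, so of `Σ q_j²`) over
pmfs with `d_TV(q,p) ≥ ε` is bi-uniform: it is constant on `{j : q_j ≥ 1/m}` and
constant on `{j : q_j < 1/m}`. -/
theorem minimizer_is_biuniform
    (m : ℕ) (hm : 0 < m) (ε : ℝ) (hε0 : 0 < ε) (hε1 : ε < 1)
    (q : Fin m → ℝ) (hq0 : ∀ j, 0 ≤ q j) (hq1 : ∑ j, q j = 1)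
    (hqd : ε ≤ (1/2) * ∑ j, |q j - 1/(m:ℝ)|)
    (hmin : ∀ r : Fin m → ℝ, (∀ j, 0 ≤ r j) → ∑ j, r j = 1 →
      ε ≤ (1/2) * ∑ j, |r j - 1/(m:ℝ)| → ∑ j, (q j)^2 ≤ ∑ j, (r j)^2) :
    (∀ j j' : Fin m, 1/(m:ℝ) ≤ q j → 1/(m:ℝ) ≤ q j' → q j = q j') ∧
    (∀ j j' : Fin m, q j < 1/(m:ℝ) → q j' < 1/(m:ℝ) → q j = q j') := by
  constructor
  · intro j j' h1 h2
    by_contra hne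
    have hjj : j ≠ j' := by rintro rfl; exact hne rfl
    refine averaging_key m ε q hq0 hq1 hqd hmin j j' hjj ?_ hne
    have hva : 1/(m:ℝ) ≤ (q j + q j')/2 := by linarith
    rw [abs_of_nonneg (by linarith), abs_of_nonneg (by linarith),
        abs_of_nonneg (by linarith)]
    ring
  · intro j j' h1 h2
    by_contra hne
    have hjj : j ≠ j' := by rintro rfl; exact hne rfl
    refine averaging_key m ε q hq0 hq1 hqd hmin j j' hjj ?_ hne
    have hva : (q j + q j')/2 < 1/(m:ℝ) := by linarith
    rw [abs_of_neg (by linarith), abs_of_neg (by linarith), abs_of_neg (by linarith)]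
    ring
end

section
/- For θ ∈ (0, 1/2] and x ≥ 0, the quantity t(x) = (1 − e^{−x})(e^{−θ} − 1) + ( x e^{−x} (e^{θ} − 1) )² is strictly decreasing in x on [0, ∞), with t(0) = 0; hence t(x) < 0 for all x > 0. -/
lemma hasDerivAt_t_aux (θ x : ℝ) :
    HasDerivAt (fun x : ℝ =>
        (1 - Real.exp (-x)) * (Real.exp (-θ) - 1)
          + (x * Real.exp (-x) * (Real.exp θ - 1))^2)
      (Real.exp (-x) * (Real.exp (-θ) - 1)
        + 2 * (x * Real.exp (-x) * (Real.exp θ - 1))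
            * ((1 - x) * Real.exp (-x) * (Real.exp θ - 1))) x := by
  have h1 : HasDerivAt (fun x : ℝ => Real.exp (-x)) (-Real.exp (-x)) x := by
    simpa using (((hasDerivAt_id x).neg).exp)
  have h2 : HasDerivAt (fun x : ℝ => (1 - Real.exp (-x))) (Real.exp (-x)) x := by
    simpa using h1.const_sub (1:ℝ)
  have h3 : HasDerivAt (fun x : ℝ => x * Real.exp (-x) * (Real.exp θ - 1))
      ((1 - x) * Real.exp (-x) * (Real.exp θ - 1)) x := by
    have := ((hasDerivAt_id x).mul h1).mul_const (Real.exp θ - 1)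
    refine this.congr_deriv ?_
    simp only [id_eq]
    ring
  have h4 := (h2.mul_const (Real.exp (-θ) - 1)).add (h3.pow 2)
  refine h4.congr_deriv ?_
  ring

lemma deriv_t_neg (θ : ℝ) (hθ0 : 0 < θ) (hθ1 : θ ≤ 1/2) (x : ℝ) (hx : 0 < x) :
    Real.exp (-x) * (Real.exp (-θ) - 1)
      + 2 * (x * Real.exp (-x) * (Real.exp θ - 1))
          * ((1 - x) * Real.exp (-x) * (Real.exp θ - 1)) < 0 := by
  set d := Real.exp θ - 1 with hd_def
  clear_value d
  have hd : 0 < d := by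
    have := Real.exp_lt_exp.mpr hθ0
    rw [Real.exp_zero] at this
    rw [hd_def]
    linarith
  have hmθ : 0 < Real.exp (-θ) := Real.exp_pos _
  have hmul : Real.exp (-θ) * Real.exp θ = 1 := by
    rw [← Real.exp_add]; simp
  -- e^θ * d < 2
  have hE : Real.exp θ * d < 2 := by
    have h2θ : Real.exp (θ + θ) ≤ Real.exp 1 := Real.exp_le_exp.mpr (by linarith)
    have he1 : Real.exp 1 < 2.7182818286 := Real.exp_one_lt_d9
    have hsq : Real.exp θ * Real.exp θ = Real.exp (θ + θ) := (Real.exp_add θ θ).symm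
    have h1θ : 1 ≤ Real.exp θ := Real.one_le_exp hθ0.le
    nlinarith
  -- d < 2 * exp(-θ)
  have hd2 : d < 2 * Real.exp (-θ) := by
    have := mul_lt_mul_of_pos_left hE hmθ
    rw [← mul_assoc, hmul, one_mul] at this
    linarith
  have hex1 : Real.exp (-x) < 1 := Real.exp_lt_one_iff.mpr (by linarith)
  have hex0 : 0 < Real.exp (-x) := Real.exp_pos _
  -- reduce: exp(-x) * (c + 2x(1-x)exp(-x)d^2) < 0
  have key : (Real.exp (-θ) - 1) + 2 * x * (1 - x) * Real.exp (-x) * d^2 < 0 := by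
    have hc : Real.exp (-θ) - 1 = -(Real.exp (-θ) * d) := by
      rw [hd_def]; nlinarith [hmul]
    rw [hc]
    have hgoal : 2 * x * (1 - x) * Real.exp (-x) * d^2 < Real.exp (-θ) * d := by
      rcases le_or_gt 1 x with h1 | h1
      · have : 2 * x * (1 - x) * Real.exp (-x) * d^2 ≤ 0 := by
          nlinarith [mul_nonneg (by linarith : (0:ℝ) ≤ x - 1) (mul_nonneg (mul_pos hx hex0).le (sq_nonneg d))]
        nlinarith [mul_pos hmθ hd]
      · -- 0 < x < 1 : 4x(1-x) ≤ 1, exp(-x) < 1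
        have hx1 : 4 * x * (1 - x) ≤ 1 := by nlinarith [sq_nonneg (2*x - 1)]
        have hxx : 0 < x * (1 - x) := mul_pos hx (by linarith)
        have step1 : 2 * x * (1 - x) * Real.exp (-x) * d^2
            < 2 * x * (1 - x) * d^2 := by
          nlinarith [mul_pos hxx (pow_pos hd 2)]
        have step2 : 2 * x * (1 - x) * d^2 ≤ (1/2) * d^2 := by
          nlinarith [sq_nonneg d]
        have step3 : (1/2) * d^2 < Real.exp (-θ) * d := by
          nlinarith
        linarith
    linarith
  nlinarith [mul_pos hex0 (neg_pos.mpr key), sq_nonneg d]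

/-- for `θ ∈ (0,1/2]`, the function
`t(x) = (1 − e^{−x})(e^{−θ} − 1) + (x e^{−x}(e^{θ} − 1))²` is strictly decreasing on
`[0,∞)` with `t(0) = 0`; hence `t(x) < 0` for all `x > 0`. -/
theorem t_strictAnti (θ : ℝ) (hθ0 : 0 < θ) (hθ1 : θ ≤ 1/2) :
    StrictAntiOn (fun x : ℝ =>
        (1 - Real.exp (-x)) * (Real.exp (-θ) - 1)
          + (x * Real.exp (-x) * (Real.exp θ - 1))^2) (Set.Ici 0) ∧
    (fun x : ℝ => (1 - Real.exp (-x)) * (Real.exp (-θ) - 1)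
          + (x * Real.exp (-x) * (Real.exp θ - 1))^2) 0 = 0 ∧
    ∀ x : ℝ, 0 < x →
      (1 - Real.exp (-x)) * (Real.exp (-θ) - 1)
          + (x * Real.exp (-x) * (Real.exp θ - 1))^2 < 0 := by
  set f : ℝ → ℝ := fun x =>
    (1 - Real.exp (-x)) * (Real.exp (-θ) - 1)
      + (x * Real.exp (-x) * (Real.exp θ - 1))^2 with hf
  have hcont : ContinuousOn f (Set.Ici 0) := by
    apply Continuous.continuousOn
    fun_prop
  have hanti : StrictAntiOn f (Set.Ici 0) := by
    apply strictAntiOn_of_deriv_neg (convex_Ici 0) hcont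
    intro x hx
    rw [interior_Ici] at hx
    rw [(hasDerivAt_t_aux θ x).deriv]
    exact deriv_t_neg θ hθ0 hθ1 x hx
  have hzero : f 0 = 0 := by simp [hf]
  refine ⟨hanti, hzero, fun x hx => ?_⟩
  have := hanti (Set.self_mem_Ici) (Set.mem_Ici.mpr hx.le) hx
  rw [hzero] at this
  exact this
end
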